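/- arXiv:2504.01808 — 2 statements merged into one kernel-verified Lean document; each statement's English description precedes it below -/
import Mathlib

section
/- Let h, κ ≥ 0 be integers, and let G be a simple graph such that χ(G[N^2(v)]) ≤ κ for every vertex v, where N^2(v) is the set of vertices at distance exactly 2 from v. Let (C, T) be a lollipop in G with χ(G[C]) > hκ. Then there is a licking (C', T') of (C, T) whose cleanliness is at least h more than the cleanliness of (C, T), and such that χ(G[C']) ≥ χ(G[C]) − hκ. -/
open SimpleGraph

/-- A lollipop `(C, T)` in `G`: an induced path `T` on at least two vertices, vertex-disjoint
from `C`, with `G[C]` connected, the last vertex of `T` having a neighbour in `C`, and all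
other vertices of `T` anticomplete to `C`. -/
structure SimpleGraph.Lollipop {V : Type*} (G : SimpleGraph V) where
  C : Set V
  first : V
  last : V
  T : G.Walk first last
  path : T.IsPath
  induced : T.toSubgraph.IsInduced
  len_pos : 1 ≤ T.length
  disj : ∀ v ∈ T.support, v ∉ C
  connC : (G.induce C).Connected
  last_adj : ∃ c ∈ C, G.Adj last c
  anti : ∀ v ∈ T.support, v ≠ last → ∀ c ∈ C, ¬ G.Adj v c

/-- The cleanliness of a lollipop: the maximum `c` such that the first `c` vertices of `T`
all have distance at least 3 (in `G`) from `C`. -/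
noncomputable def SimpleGraph.Lollipop.cleanliness {V : Type*} {G : SimpleGraph V}
    (P : G.Lollipop) : ℕ :=
  sSup {c : ℕ | ∀ v ∈ P.T.support.take c, ∀ x ∈ P.C, ∀ w : G.Walk v x, 3 ≤ w.length}

/-- `(C', T')` is a licking of `(C, T)`: `C' ⊆ C`, they have the same end, `T` is an initial
subpath of `T'`, and `V(T') ⊆ V(T) ∪ C`. -/
def SimpleGraph.Lollipop.IsLicking {V : Type*} {G : SimpleGraph V}
    (P' P : G.Lollipop) : Prop :=
  P'.C ⊆ P.C ∧ P'.first = P.first ∧ P.T.support <+: P'.T.support ∧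
    ∀ v ∈ P'.T.support, v ∈ P.T.support ∨ v ∈ P.C

open Walk

namespace SimpleGraph.Lollipop


variable {V : Type*} {G : SimpleGraph V}

lemma getVert_mem_take {a b : V} (w : G.Walk a b) : ∀ i c : ℕ, i < c → i ≤ w.length →
    w.getVert i ∈ w.support.take c := by
  induction w with
  | nil =>
    intro i c hic hil
    simp only [length_nil, Nat.le_zero] at hil
    subst hil
    cases c with
    | zero => omega
    | succ c' => simp
  | @cons u v b h p ih =>
    intro i c hic hil
    cases c with
    | zero => omega
    | succ c' =>
      rw [support_cons, List.take_succ_cons]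
      cases i with
      | zero => simp
      | succ i' =>
        simp only [getVert_cons_succ, List.mem_cons]
        right
        exact ih i' c' (by omega) (by simpa using hil)

lemma path_getVert_inj {a b : V} {w : G.Walk a b} (hw : w.IsPath) : ∀ {i j : ℕ},
    i ≤ w.length → j ≤ w.length → w.getVert i = w.getVert j → i = j := by
  induction w with
  | nil => intro i j hi hj _; simp at hi hj; omega
  | @cons u v b h p ih =>
    intro i j hi hj hij
    have hps := hw.of_cons
    have hna : u ∉ p.support := by
      have := hw.support_nodup
      simp only [support_cons, List.nodup_cons] at this
      exact this.1
    cases i with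
    | zero =>
      cases j with
      | zero => rfl
      | succ j' =>
        exfalso
        rw [getVert_zero, getVert_cons_succ] at hij
        exact hna (mem_support_iff_exists_getVert.2 ⟨j', hij.symm, by simpa using hj⟩)
    | succ i' =>
      cases j with
      | zero =>
        exfalso
        rw [getVert_zero, getVert_cons_succ] at hij
        exact hna (mem_support_iff_exists_getVert.2 ⟨i', hij, by simpa using hi⟩)
      | succ j' =>
        simp only [getVert_cons_succ] at hij
        have := ih hps (by simpa using hi) (by simpa using hj) hij
        omega

lemma reachable_induce_of_walk {s : Set V} {a b : V} (w : G.Walk a b)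
    (hs : ∀ x ∈ w.support, x ∈ s) (ha : a ∈ s) (hb : b ∈ s) :
    (G.induce s).Reachable ⟨a, ha⟩ ⟨b, hb⟩ := by
  induction w with
  | nil => rfl
  | @cons u v b h p ih =>
    have hv : v ∈ s := hs v (by simp)
    have hadj : (G.induce s).Adj ⟨u, ha⟩ ⟨v, hv⟩ := by
      simpa using h
    exact (hadj.reachable).trans (ih (fun x hx => hs x (by simp [hx])) hv hb)

lemma exists_walk_subset {s : Set V} (hconn : (G.induce s).Connected)
    {a b : V} (ha : a ∈ s) (hb : b ∈ s) :
    ∃ w : G.Walk a b, ∀ x ∈ w.support, x ∈ s := by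
  obtain ⟨p⟩ := hconn.preconnected ⟨a, ha⟩ ⟨b, hb⟩
  refine ⟨p.map (Embedding.induce s).toHom, ?_⟩
  intro x hx
  replace hx := List.mem_map.1
    (Eq.mp (congrArg (x ∈ ·) (Walk.support_map (Embedding.induce s).toHom p)) hx)
  obtain ⟨y, _, rfl⟩ := hx
  exact y.2

variable {V : Type*} [Fintype V] {G : SimpleGraph V}

lemma chi_mono {s t : Set V} (h : s ⊆ t) :
    (G.induce s).chromaticNumber ≤ (G.induce t).chromaticNumber :=
  chromaticNumber_mono_of_hom (G.induceHomOfLE h).toHom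

lemma chi_ne_top (s : Set V) : (G.induce s).chromaticNumber ≠ ⊤ := by
  classical
  exact (chromaticNumber_le_card (G := G.induce s)).trans_lt
    (by exact_mod_cast ENat.coe_lt_top _) |>.ne

lemma chi_coe_toNat (s : Set V) :
    (((G.induce s).chromaticNumber.toNat : ℕ) : ℕ∞) = (G.induce s).chromaticNumber :=
  ENat.coe_toNat (chi_ne_top s)

lemma chi_colorable (s : Set V) :
    (G.induce s).Colorable (G.induce s).chromaticNumber.toNat := by
  classical
  exact colorable_chromaticNumber_of_fintype _

lemma chi_union (A B : Set V) :
    (G.induce (A ∪ B)).chromaticNumber ≤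
      (G.induce A).chromaticNumber + (G.induce B).chromaticNumber := by
  classical
  set m := (G.induce A).chromaticNumber.toNat with hm
  set n := (G.induce B).chromaticNumber.toNat with hn
  obtain ⟨cA⟩ := chi_colorable (G := G) A
  obtain ⟨cB⟩ := chi_colorable (G := G) B
  have cC : (G.induce (A ∪ B)).Coloring (Fin m ⊕ Fin n) := by
    refine Coloring.mk (fun v => if h : (v : V) ∈ A then Sum.inl (cA ⟨v, h⟩)
      else Sum.inr (cB ⟨v, v.2.resolve_left h⟩)) ?_
    rintro ⟨u, hu⟩ ⟨v, hv⟩ hadj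
    have hG : G.Adj u v := by simpa using hadj
    by_cases h1 : u ∈ A <;> by_cases h2 : v ∈ A <;>
      simp only [h1, h2, dif_pos, dif_neg, not_false_iff, ne_eq, Sum.inl.injEq,
        Sum.inr.injEq, reduceCtorEq, not_false_eq_true] <;>
      first
        | exact cA.valid (by simpa using hG)
        | exact cB.valid (by simpa using hG)
        | simp
  have : (G.induce (A ∪ B)).Colorable (m + n) := by
    simpa using cC.colorable
  calc (G.induce (A ∪ B)).chromaticNumber ≤ ((m + n : ℕ) : ℕ∞) := this.chromaticNumber_le
    _ = (G.induce A).chromaticNumber + (G.induce B).chromaticNumber := by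
        push_cast [hm, hn, chi_coe_toNat]
        rfl
lemma chi_max_coloring {A R B : Set V} (hRA : R ⊆ A) (hBA : B ⊆ A)
    (hcov : ∀ x ∈ A, x ∈ R ∨ x ∈ B)
    (hsep : ∀ u v : V, u ∈ R → v ∈ B → ¬ G.Adj u v) :
    (G.induce A).chromaticNumber ≤
      max (G.induce R).chromaticNumber (G.induce B).chromaticNumber := by
  classical
  set m := (G.induce R).chromaticNumber.toNat with hm
  set n := (G.induce B).chromaticNumber.toNat with hn
  obtain ⟨cR⟩ := (colorable_chromaticNumber_of_fintype (G.induce R)).mono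
    (le_max_left m n)
  obtain ⟨cB⟩ := (colorable_chromaticNumber_of_fintype (G.induce B)).mono
    (le_max_right m n)
  have cC : (G.induce A).Coloring (Fin (max m n)) := by
    refine Coloring.mk (fun v => if h : (v : V) ∈ R then cR ⟨v, h⟩
      else cB ⟨v, (hcov v v.2).resolve_left h⟩) ?_
    rintro ⟨u, hu⟩ ⟨v, hv⟩ hadj
    have hG : G.Adj u v := by simpa using hadj
    by_cases h1 : u ∈ R <;> by_cases h2 : v ∈ R <;>
      simp only [h1, h2, dif_pos, dif_neg, not_false_iff]
    · exact cR.valid (by simpa using hG)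
    · exact absurd hG (hsep u v h1 ((hcov v hv).resolve_left h2))
    · exact fun hc => (hsep v u h2 ((hcov u hu).resolve_left h1)) hG.symm
    · exact cB.valid (by simpa using hG)
  have hcol : (G.induce A).Colorable (max m n) := by simpa using cC.colorable
  calc (G.induce A).chromaticNumber ≤ ((max m n : ℕ) : ℕ∞) := hcol.chromaticNumber_le
    _ = _ := by
      have hmc : (((m ⊔ n : ℕ)) : ℕ∞) = (m : ℕ∞) ⊔ (n : ℕ∞) := by
        rcases le_total m n with h | h
        · rw [max_eq_right h, max_eq_right (by exact_mod_cast h : (m : ℕ∞) ≤ n)]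
        · rw [max_eq_left h, max_eq_left (by exact_mod_cast h : (n : ℕ∞) ≤ m)]
      rw [hmc, hm, hn, ENat.coe_toNat, ENat.coe_toNat]
      · exact ((colorable_chromaticNumber_of_fintype
          (G.induce B)).chromaticNumber_le.trans_lt (by exact_mod_cast ENat.coe_lt_top _)).ne
      · exact ((colorable_chromaticNumber_of_fintype
          (G.induce R)).chromaticNumber_le.trans_lt (by exact_mod_cast ENat.coe_lt_top _)).ne

lemma exists_connected_piece :
    ∀ (N : ℕ) (A : Set V), A.ncard ≤ N → A.Nonempty →
      ∃ K : Set V, K ⊆ A ∧ K.Nonempty ∧ (G.induce K).Connected ∧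
        (G.induce A).chromaticNumber ≤ (G.induce K).chromaticNumber := by
  classical
  intro N
  induction N with
  | zero =>
    intro A hcard hne
    exfalso
    have := (Set.ncard_pos (Set.toFinite A)).2 hne
    omega
  | succ N ih =>
    intro A hcard ⟨a, ha⟩
    set R : Set V := {v | ∃ w : G.Walk a v, ∀ x ∈ w.support, x ∈ A} with hR
    have haR : a ∈ R := ⟨Walk.nil, by simpa using ha⟩
    have hRA : R ⊆ A := by rintro v ⟨w, hw⟩; exact hw v w.end_mem_support
    have hRconn : (G.induce R).Connected := by
      rw [connected_iff]
      refine ⟨?_, ⟨⟨a, haR⟩⟩⟩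
      rintro ⟨u, hu⟩ ⟨v, hv⟩
      obtain ⟨wu, hwu⟩ := id hu
      obtain ⟨wv, hwv⟩ := id hv
      have key : ∀ (v : V) (w : G.Walk a v), (∀ x ∈ w.support, x ∈ A) →
          (∀ x ∈ w.support, x ∈ R) := by
        intro v w hw x hx
        exact ⟨w.takeUntil x hx, fun y hy => hw y (w.support_takeUntil_subset hx hy)⟩
      exact ((reachable_induce_of_walk wu (key _ wu hwu) haR hu).symm).trans
        (reachable_induce_of_walk wv (key _ wv hwv) haR hv)
    by_cases hAR : A ⊆ R
    · have : R = A := hRA.antisymm hAR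
      exact ⟨A, le_refl _, ⟨a, ha⟩, this ▸ hRconn, le_refl _⟩
    · set B := A \ R with hB
      have hsep : ∀ u v : V, u ∈ R → v ∈ B → ¬ G.Adj u v := by
        rintro u v ⟨w, hw⟩ hvB hadj
        refine hvB.2 ⟨w.concat hadj, ?_⟩
        intro x hx
        rw [support_concat] at hx
        simp only [List.concat_eq_append, List.mem_append, List.mem_singleton] at hx
        rcases hx with hx | rfl
        · exact hw x hx
        · exact hvB.1
      have hmax := chi_max_coloring (G := G) hRA (Set.diff_subset) 
        (fun x hx => by by_cases h : x ∈ R; exacts [Or.inl h, Or.inr ⟨hx, h⟩]) hsep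
      rcases max_cases (G.induce R).chromaticNumber (G.induce B).chromaticNumber with
        ⟨heq, _⟩ | ⟨heq, _⟩
      · exact ⟨R, hRA, ⟨a, haR⟩, hRconn, by rw [heq] at hmax; exact hmax⟩
      · rw [heq] at hmax
        obtain ⟨b, hb⟩ : B.Nonempty := by
          obtain ⟨b, hbA, hbR⟩ := Set.not_subset.1 hAR
          exact ⟨b, hbA, hbR⟩
        have hBlt : B.ncard ≤ N := by
          have h1 : B ⊂ A := ⟨Set.diff_subset, fun hsub => (hsub ha).2 haR⟩
          have := Set.ncard_lt_ncard h1 (Set.toFinite A)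
          omega
        obtain ⟨K, hKB, hKne, hKconn, hKchi⟩ := ih B hBlt ⟨b, hb⟩
        exact ⟨K, hKB.trans Set.diff_subset, hKne, hKconn, hmax.trans hKchi⟩

lemma take_mem_getVert {a b : V} (w : G.Walk a b) : ∀ {c : ℕ} {v : V},
    v ∈ w.support.take c → ∃ i, i < c ∧ i ≤ w.length ∧ w.getVert i = v := by
  induction w with
  | nil =>
    intro c v hv
    cases c with
    | zero => simp at hv
    | succ c' =>
      simp only [support_nil, List.take_succ_cons, List.take_nil, List.mem_singleton] at hv
      exact ⟨0, by omega, by omega, hv.symm⟩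
  | @cons u x b h p ih =>
    intro c v hv
    cases c with
    | zero => simp at hv
    | succ c' =>
      rw [support_cons, List.take_succ_cons, List.mem_cons] at hv
      rcases hv with rfl | hv
      · exact ⟨0, by omega, by omega, rfl⟩
      · obtain ⟨i, hic, hil, hgv⟩ := ih hv
        exact ⟨i + 1, by omega, by simp; omega, by rwa [getVert_cons_succ]⟩

lemma getVert_takeUntil_length [DecidableEq V] {a b u : V} (w : G.Walk a b) (h : u ∈ w.support) :
    w.getVert (w.takeUntil u h).length = u := by
  have h2 := getVert_append (w.takeUntil u h) (w.dropUntil u h) (w.takeUntil u h).length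
  rw [w.take_spec h] at h2
  simpa using h2

lemma length_takeUntil_add [DecidableEq V] {a b u : V} (w : G.Walk a b) (h : u ∈ w.support) :
    (w.takeUntil u h).length + (w.dropUntil u h).length = w.length := by
  have h2 := congrArg Walk.length (w.take_spec h)
  rwa [length_append] at h2

variable {V : Type*} {G : SimpleGraph V} (P : G.Lollipop)

def cleanSet : Set ℕ :=
  {c : ℕ | ∀ v ∈ P.T.support.take c, ∀ x ∈ P.C, ∀ w : G.Walk v x, 3 ≤ w.length}

lemma cleanliness_eq : P.cleanliness = sSup P.cleanSet := rfl

lemma zero_mem_cleanSet : 0 ∈ P.cleanSet := by simp [cleanSet]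

lemma cleanSet_le {c : ℕ} (hc : c ∈ P.cleanSet) : c ≤ P.T.length := by
  by_contra hgt
  push_neg at hgt
  have htake : P.T.support.take c = P.T.support :=
    List.take_of_length_le (by rw [length_support]; omega)
  obtain ⟨x, hx, hadj⟩ := P.last_adj
  have := hc P.last (by rw [htake]; exact P.T.end_mem_support) x hx hadj.toWalk
  simp [Adj.toWalk] at this

lemma cleanSet_bddAbove : BddAbove P.cleanSet := ⟨P.T.length, fun _ hc => P.cleanSet_le hc⟩

lemma cleanliness_mem : P.cleanliness ∈ P.cleanSet :=
  Nat.sSup_mem ⟨0, P.zero_mem_cleanSet⟩ P.cleanSet_bddAbove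

lemma le_cleanliness {c : ℕ} (hc : c ∈ P.cleanSet) : c ≤ P.cleanliness :=
  le_csSup P.cleanSet_bddAbove hc

lemma cleanliness_lt : P.cleanliness < P.T.length := by
  have hle := P.cleanSet_le P.cleanliness_mem
  rcases lt_or_eq_of_le hle with h | h
  · exact h
  exfalso
  have hm := P.cleanliness_mem
  rw [h] at hm
  have hpos := P.len_pos
  have hmem : P.T.getVert (P.T.length - 1) ∈ P.T.support.take P.T.length :=
    getVert_mem_take P.T _ _ (by omega) (by omega)
  have hadj1 : G.Adj (P.T.getVert (P.T.length - 1)) P.last := by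
    have := P.T.adj_getVert_succ (i := P.T.length - 1) (by omega)
    rwa [show P.T.length - 1 + 1 = P.T.length by omega, P.T.getVert_length] at this
  obtain ⟨x, hx, hadj2⟩ := P.last_adj
  have := hm _ hmem x hx (Walk.cons hadj1 hadj2.toWalk)
  simp [Adj.toWalk] at this

end SimpleGraph.Lollipop

lemma licking_trans {V : Type*} {G : SimpleGraph V} {P₂ P₁ P₀ : G.Lollipop}
    (h21 : P₂.IsLicking P₁) (h10 : P₁.IsLicking P₀) : P₂.IsLicking P₀ :=
  ⟨h21.1.trans h10.1, h21.2.1.trans h10.2.1, h10.2.2.1.trans h21.2.2.1,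
    fun v hv => (h21.2.2.2 v hv).elim (fun h => h10.2.2.2 v h) (fun h => Or.inr (h10.1 h))⟩

lemma licking_refl {V : Type*} {G : SimpleGraph V} (P : G.Lollipop) : P.IsLicking P :=
  ⟨le_refl _, rfl, List.prefix_refl _, fun v hv => Or.inl hv⟩

lemma exists_crossing {V : Type*} {G : SimpleGraph V} {K : Set V} :
    ∀ {a b : V} (w : G.Walk a b), a ∉ K → b ∈ K →
      ∃ (z : V) (w' : G.Walk a z), (∃ x ∈ K, G.Adj z x) ∧
        (∀ v ∈ w'.support, v ∈ w.support) ∧ (∀ v ∈ w'.support, v ∉ K) := by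
  intro a b w
  induction w with
  | nil => intro ha hb; exact absurd hb ha
  | @cons u v b h p ih =>
    intro ha hb
    by_cases hv : v ∈ K
    · exact ⟨u, Walk.nil, ⟨v, hv, h⟩, fun x hx => by simp at hx; simp [hx],
        fun x hx => by simp at hx; rwa [hx]⟩
    · obtain ⟨z, w', hadj, hsub, hK⟩ := ih hv hb
      refine ⟨z, Walk.cons h w', hadj, ?_, ?_⟩
      · intro x hx
        rw [support_cons, List.mem_cons] at hx ⊢
        exact hx.imp id (fun h' => hsub x h')
      · intro x hx
        rw [support_cons, List.mem_cons] at hx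
        rcases hx with rfl | hx
        exacts [ha, hK x hx]

section StepLemma
variable {V : Type*} [Fintype V] {G : SimpleGraph V}

open SimpleGraph.Lollipop in
lemma lollipop_step (κ : ℕ)
    (hN2 : ∀ v : V, (G.induce {w : V | G.dist v w = 2}).chromaticNumber ≤ (κ : ℕ∞))
    (P : G.Lollipop) (hchi : (κ : ℕ∞) < (G.induce P.C).chromaticNumber) :
    ∃ P' : G.Lollipop, P'.IsLicking P ∧ P.cleanliness + 1 ≤ P'.cleanliness ∧
      (G.induce P.C).chromaticNumber - (κ : ℕ∞) ≤ (G.induce P'.C).chromaticNumber := by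
  classical
  set c := P.cleanliness with hc
  have hclt : c < P.T.length := P.cleanliness_lt
  set t := P.T.getVert c with ht
  have ht_mem : t ∈ P.T.support :=
    Walk.mem_support_iff_exists_getVert.2 ⟨c, rfl, by omega⟩
  have ht_ne_last : t ≠ P.last := by
    intro hlast
    have : c = P.T.length := path_getVert_inj P.path (by omega) (le_refl _)
      (by rw [P.T.getVert_length]; exact hlast)
    omega
  have ht_notC : t ∉ P.C := P.disj t ht_mem
  set D := {w : V | G.dist t w = 2} with hD
  set C₀ := P.C \ D with hC₀
  -- chromatic bound for C₀
  have hsplit : (G.induce P.C).chromaticNumber ≤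
      (G.induce C₀).chromaticNumber + (κ : ℕ∞) := by
    have hcov : P.C = C₀ ∪ (P.C ∩ D) := by
      ext x; by_cases hx : x ∈ D <;> simp [hC₀, hx]
    calc (G.induce P.C).chromaticNumber
        = (G.induce (C₀ ∪ (P.C ∩ D))).chromaticNumber := by rw [← hcov]
      _ ≤ (G.induce C₀).chromaticNumber + (G.induce (P.C ∩ D)).chromaticNumber :=
          chi_union _ _
      _ ≤ (G.induce C₀).chromaticNumber + (κ : ℕ∞) := by
          gcongr
          exact (chi_mono Set.inter_subset_right).trans (hN2 t)
  have hC0chi : (G.induce P.C).chromaticNumber - (κ : ℕ∞) ≤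
      (G.induce C₀).chromaticNumber := tsub_le_iff_right.2 hsplit
  have hC0pos : (0 : ℕ∞) < (G.induce C₀).chromaticNumber :=
    lt_of_lt_of_le (tsub_pos_of_lt hchi) hC0chi
  have hC0ne : C₀.Nonempty := by
    rw [Set.nonempty_iff_ne_empty]
    intro hemp
    haveI : IsEmpty ↥C₀ := by rw [hemp]; infer_instance
    rw [SimpleGraph.chromaticNumber_eq_zero_of_isEmpty] at hC0pos
    exact lt_irrefl _ hC0pos
  obtain ⟨K, hKC₀, hKne, hKconn, hKchi⟩ :=
    exists_connected_piece (G := G) C₀.ncard C₀ (le_refl _) hC0ne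
  have hKC : K ⊆ P.C := hKC₀.trans Set.diff_subset
  have hKD : ∀ x ∈ K, x ∉ D := fun x hx => (hKC₀ hx).2
  -- distance-3 property for the first c+1 vertices of T w.r.t. K
  have hfar : ∀ v ∈ P.T.support.take (c + 1), ∀ x ∈ K, ∀ w : G.Walk v x, 3 ≤ w.length := by
    intro v hv x hx w
    obtain ⟨i, hic, hil, hgv⟩ := take_mem_getVert P.T hv
    rcases Nat.lt_or_ge i c with hi | hi
    · exact P.cleanliness_mem v (hgv ▸ getVert_mem_take P.T i c hi hil) x (hKC hx) w
    · have hieq : i = c := by omega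
      subst hieq
      subst hgv
      by_contra hlt
      push_neg at hlt
      have hreach : G.Reachable (P.T.getVert c) x := ⟨w⟩
      have hdle : G.dist (P.T.getVert c) x ≤ w.length := SimpleGraph.dist_le w
      have hd2 : G.dist (P.T.getVert c) x ≠ 2 := fun h2 => hKD x hx h2
      have hd1 : G.dist (P.T.getVert c) x ≠ 1 := fun h1 =>
        P.anti _ ht_mem ht_ne_last x (hKC hx) (SimpleGraph.dist_eq_one_iff_adj.1 h1)
      have hd0 : G.dist (P.T.getVert c) x ≠ 0 := by
        rw [SimpleGraph.dist_ne_zero_iff_ne_and_reachable]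
        exact ⟨fun he => ht_notC (show t ∈ P.C from by rw [ht, he]; exact hKC hx), hreach⟩
      omega
  -- a walk from `last` into the neighbourhood of K
  obtain ⟨c₀, hc₀C, hlc₀⟩ := P.last_adj
  obtain ⟨k₀, hk₀⟩ := hKne
  obtain ⟨winC, hwinC⟩ := exists_walk_subset P.connC hc₀C (hKC hk₀)
  have hlastK : P.last ∉ K := fun h => P.disj _ P.T.end_mem_support (hKC h)
  obtain ⟨z1, w1, hz1adj, hw1sub, hw1K⟩ :=
    exists_crossing (Walk.cons hlc₀ winC) hlastK hk₀
  have hw1sup : ∀ v ∈ w1.support, v = P.last ∨ v ∈ P.C := by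
    intro v hv
    have := hw1sub v hv
    rw [Walk.support_cons, List.mem_cons] at this
    exact this.imp id (fun h => hwinC v h)
  -- minimal length such walk
  set S : Set ℕ := {n | ∃ (z : V) (w : G.Walk P.last z),
    ((∃ x ∈ K, G.Adj z x) ∧ (∀ v ∈ w.support, v = P.last ∨ v ∈ P.C) ∧
      (∀ v ∈ w.support, v ∉ K)) ∧ w.length = n} with hS
  have hSne : S.Nonempty := ⟨w1.length, z1, w1, ⟨hz1adj, hw1sup, hw1K⟩, rfl⟩
  set n₀ := sInf S with hn₀
  obtain ⟨z, w', ⟨hzadj, hwsup', hwK'⟩, hwlen'⟩ := Nat.sInf_mem hSne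
  have hmin : ∀ (z' : V) (w'' : G.Walk P.last z'), (∃ x ∈ K, G.Adj z' x) →
      (∀ v ∈ w''.support, v = P.last ∨ v ∈ P.C) → (∀ v ∈ w''.support, v ∉ K) →
      n₀ ≤ w''.length :=
    fun z' w'' h1 h2 h3 => Nat.sInf_le ⟨z', w'', ⟨h1, h2, h3⟩, rfl⟩
  set wp := w'.bypass with hwp
  have hwp_path : wp.IsPath := w'.bypass_isPath
  have hwp_sub : ∀ v ∈ wp.support, v ∈ w'.support := fun v hv => w'.support_bypass_subset hv
  have hwsup : ∀ v ∈ wp.support, v = P.last ∨ v ∈ P.C := fun v hv => hwsup' v (hwp_sub v hv)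
  have hwK : ∀ v ∈ wp.support, v ∉ K := fun v hv => hwK' v (hwp_sub v hv)
  have hwp_len : wp.length = n₀ :=
    le_antisymm (w'.length_bypass_le.trans hwlen'.le) (hmin z wp hzadj hwsup hwK)
  clear_value n₀
  -- shortcut bound
  have hshort : ∀ (u' v' : V) (hu' : u' ∈ wp.support) (hv' : v' ∈ wp.support),
      G.Adj u' v' →
      (wp.takeUntil v' hv').length ≤ (wp.takeUntil u' hu').length + 1 := by
    intro u' v' hu' hv' hadj'
    set w2 := (wp.takeUntil u' hu').append (Walk.cons hadj' (wp.dropUntil v' hv')) with hw2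
    have hw2sub : ∀ x ∈ w2.support, x ∈ wp.support := by
      intro x hx
      rw [hw2, Walk.mem_support_append_iff] at hx
      rcases hx with hx | hx
      · exact wp.support_takeUntil_subset hu' hx
      · rw [Walk.support_cons, List.mem_cons] at hx
        rcases hx with rfl | hx
        · exact hu'
        · exact wp.support_dropUntil_subset hv' hx
    have hle := hmin z w2 hzadj (fun v hv => hwsup v (hw2sub v hv))
      (fun v hv => hwK v (hw2sub v hv))
    rw [hw2, Walk.length_append, Walk.length_cons] at hle
    have h1 := length_takeUntil_add wp hv'
    omega
  -- induced property of wp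
  have hwind : ∀ u v : V, u ∈ wp.support → v ∈ wp.support → G.Adj u v →
      wp.toSubgraph.Adj u v := by
    intro u v hu hv hadj
    have hgu : wp.getVert (wp.takeUntil u hu).length = u := getVert_takeUntil_length wp hu
    have hgv : wp.getVert (wp.takeUntil v hv).length = v := getVert_takeUntil_length wp hv
    have hlu := length_takeUntil_add wp hu
    have hlv := length_takeUntil_add wp hv
    have h1 := hshort u v hu hv hadj
    have h2 := hshort v u hv hu hadj.symm
    set iu := (wp.takeUntil u hu).length
    set iv := (wp.takeUntil v hv).length
    have hne : iu ≠ iv := by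
      intro he
      exact hadj.ne (by rw [← hgu, ← hgv, he])
    rcases Nat.lt_or_ge iu iv with hlt | hge
    · have : iv = iu + 1 := by omega
      have hadj' := wp.toSubgraph_adj_getVert (i := iu) (by omega)
      rwa [hgu, show iu + 1 = iv by omega, hgv] at hadj'
    · have : iu = iv + 1 := by omega
      have hadj' := wp.toSubgraph_adj_getVert (i := iv) (by omega)
      rw [hgv, show iv + 1 = iu by omega, hgu] at hadj'
      exact hadj'.symm
  -- non-endpoint vertices of wp are not adjacent to K
  have hwnadj : ∀ v ∈ wp.support, v ≠ z → ∀ x ∈ K, ¬ G.Adj v x := by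
    intro v hv hvz x hx hadj
    have hle := hmin v (wp.takeUntil v hv) ⟨x, hx, hadj⟩
      (fun y hy => hwsup y (wp.support_takeUntil_subset hv hy))
      (fun y hy => hwK y (wp.support_takeUntil_subset hv hy))
    have h1 := length_takeUntil_add wp hv
    have h2 : 1 ≤ (wp.dropUntil v hv).length := by
      by_contra hz0
      exact hvz (Walk.eq_of_length_eq_zero (p := wp.dropUntil v hv) (by omega))
    omega
  -- assembling the new lollipop
  have hlast_w : P.last ∈ wp.support := wp.start_mem_support
  have hTdisj : ∀ v ∈ P.T.support, v ∉ K := fun v hv hvK => P.disj v hv (hKC hvK)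
  have hlast_tail : P.last ∉ wp.support.tail := by
    have hnd := hwp_path.support_nodup
    rw [wp.support_eq_cons] at hnd
    exact (List.nodup_cons.1 hnd).1
  have htail_C : ∀ v ∈ wp.support.tail, v ∈ P.C := by
    intro v hv
    rcases hwsup v (List.mem_of_mem_tail hv) with rfl | h
    · exact absurd hv hlast_tail
    · exact h
  set T2 := P.T.append wp with hT2
  have hT2supp : T2.support = P.T.support ++ wp.support.tail := Walk.support_append _ _
  have hT2path : T2.IsPath := by
    rw [Walk.isPath_def, hT2supp]
    refine List.Nodup.append P.path.support_nodup
      ((List.tail_sublist _).nodup hwp_path.support_nodup) ?_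
    intro a haT haw
    exact P.disj a haT (htail_C a haw)
  have hT2ind : T2.toSubgraph.IsInduced := by
    intro u hu v hv hadj
    have hT2sub : T2.toSubgraph = P.T.toSubgraph ⊔ wp.toSubgraph :=
      Walk.toSubgraph_append _ _
    rw [hT2sub, SimpleGraph.Subgraph.verts_sup, Set.mem_union,
      Walk.mem_verts_toSubgraph, Walk.mem_verts_toSubgraph] at hu hv
    rw [hT2sub, SimpleGraph.Subgraph.sup_adj]
    have hTind : ∀ a b, a ∈ P.T.support → b ∈ P.T.support → G.Adj a b →
        P.T.toSubgraph.Adj a b := fun a b ha hb hab =>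
      P.induced (by rwa [Walk.mem_verts_toSubgraph]) (by rwa [Walk.mem_verts_toSubgraph]) hab
    have hmixed : ∀ a b, a ∈ P.T.support → b ∈ wp.support → G.Adj a b →
        P.T.toSubgraph.Adj a b ∨ wp.toSubgraph.Adj a b := by
      intro a b ha hb hab
      by_cases haL : a = P.last
      · subst haL
        exact Or.inr (hwind _ _ hlast_w hb hab)
      · rcases hwsup b hb with rfl | hbC
        · exact Or.inl (hTind a P.last ha P.T.end_mem_support hab)
        · exact absurd hab (P.anti a ha haL b hbC)
    rcases hu with hu | hu <;> rcases hv with hv | hv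
    · exact Or.inl (hTind u v hu hv hadj)
    · exact hmixed u v hu hv hadj
    · exact (hmixed v u hv hu hadj.symm).imp (fun h => h.symm) (fun h => h.symm)
    · exact Or.inr (hwind u v hu hv hadj)
  have hT2disj : ∀ v ∈ T2.support, v ∉ K := by
    intro v hv
    rw [hT2supp, List.mem_append] at hv
    rcases hv with hv | hv
    · exact hTdisj v hv
    · exact hwK v (List.mem_of_mem_tail hv)
  have hT2anti : ∀ v ∈ T2.support, v ≠ z → ∀ x ∈ K, ¬ G.Adj v x := by
    intro v hv hvz x hx
    rw [hT2supp, List.mem_append] at hv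
    rcases hv with hv | hv
    · by_cases hvl : v = P.last
      · subst hvl
        exact hwnadj P.last hlast_w hvz x hx
      · exact P.anti v hv hvl x (hKC hx)
    · exact hwnadj v (List.mem_of_mem_tail hv) hvz x hx
  refine ⟨⟨K, P.first, z, T2, hT2path, hT2ind, ?_, hT2disj, hKconn, hzadj, hT2anti⟩,
    ⟨hKC, rfl, ⟨wp.support.tail, hT2supp.symm⟩, ?_⟩, ?_, hC0chi.trans hKchi⟩
  · rw [hT2, Walk.length_append]
    have := P.len_pos
    omega
  · intro v hv
    rw [hT2supp, List.mem_append] at hv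
    exact hv.imp id (fun h => htail_C v h)
  · refine SimpleGraph.Lollipop.le_cleanliness _ ?_
    intro v hv x hx w
    have htake : T2.support.take (c + 1) = P.T.support.take (c + 1) := by
      rw [hT2supp]
      exact List.take_append_of_le_length (by rw [Walk.length_support]; omega)
    rw [show (c + 1) = P.cleanliness + 1 from rfl] at htake
    exact hfar v (by rw [← htake]; exact hv) x hx w

end StepLemma


/-- Let `h, κ ≥ 0`, and let `G` be a graph with `χ(G[N²(v)]) ≤ κ` for every vertex `v`.
If `(C, T)` is a lollipop in `G` with `χ(G[C]) > hκ`, then there is a licking `(C', T')` of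
`(C, T)` whose cleanliness is at least `h` more than that of `(C, T)`, and with
`χ(G[C']) ≥ χ(G[C]) - hκ`. -/
theorem stmt_12 {V : Type*} [Fintype V] (G : SimpleGraph V) (h κ : ℕ)
    (hN2 : ∀ v : V, (G.induce {w : V | G.dist v w = 2}).chromaticNumber ≤ (κ : ℕ∞))
    (P : G.Lollipop)
    (hchi : ((h * κ : ℕ) : ℕ∞) < (G.induce P.C).chromaticNumber) :
    ∃ P' : G.Lollipop, P'.IsLicking P ∧
      P.cleanliness + h ≤ P'.cleanliness ∧
      (G.induce P.C).chromaticNumber - ((h * κ : ℕ) : ℕ∞) ≤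
        (G.induce P'.C).chromaticNumber := by
  induction h generalizing P with
  | zero =>
    refine ⟨P, licking_refl P, le_of_eq (add_zero _), ?_⟩
    simp
  | succ h ih =>
    have hκle : ((κ : ℕ)) ≤ ((h + 1) * κ : ℕ) := Nat.le_mul_of_pos_left κ (by omega)
    have hchi1 : (κ : ℕ∞) < (G.induce P.C).chromaticNumber :=
      lt_of_le_of_lt (by exact_mod_cast hκle) hchi
    obtain ⟨P₁, hL1, hclean1, hchi1'⟩ := lollipop_step κ hN2 P hchi1
    have hcast : (((h + 1) * κ : ℕ) : ℕ∞) = (κ : ℕ∞) + ((h * κ : ℕ) : ℕ∞) := by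
      push_cast; ring
    have hP₁chi : ((h * κ : ℕ) : ℕ∞) < (G.induce P₁.C).chromaticNumber := by
      refine lt_of_lt_of_le ?_ hchi1'
      rw [lt_tsub_iff_left]
      rw [hcast] at hchi
      exact hchi
    obtain ⟨P', hL2, hclean2, hchi2⟩ := ih P₁ hP₁chi
    refine ⟨P', licking_trans hL2 hL1, by omega, ?_⟩
    rw [hcast, ← tsub_tsub]
    exact (tsub_le_tsub_right hchi1' _).trans hchi2
end

section
/- Let G be a triangle-free simple graph with no 5-hole and no 7-hole. Then for every vertex v of G and every i ∈ {1, 2, 3}, the set N^i(v) of vertices at distance exactly i from v is a stable (independent) set of G. -/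
open SimpleGraph

/-- `G` has an induced cycle of length `n` (a hole, when `n ≥ 4`). -/
def SimpleGraph.HasInducedCycle {V : Type*} (G : SimpleGraph V) (n : ℕ) : Prop :=
  ∃ (v : V) (w : G.Walk v v), w.IsCycle ∧ w.length = n ∧ w.toSubgraph.IsInduced

private lemma tri_aux {V : Type*} {G : SimpleGraph V} (htri : G.CliqueFree 3) {a b c : V}
    (h1 : G.Adj a b) (h2 : G.Adj a c) (h3 : G.Adj b c) : False := by
  classical
  exact htri {a, b, c} (SimpleGraph.is3Clique_triple_iff.mpr ⟨h1, h2, h3⟩)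

private lemma induced5_aux {V : Type*} (G : SimpleGraph V) (a b c d e : V)
    (hab : G.Adj a b) (hbc : G.Adj b c) (hcd : G.Adj c d) (hde : G.Adj d e) (hea : G.Adj e a)
    (hac : ¬ G.Adj a c) (had : ¬ G.Adj a d) (hbd : ¬ G.Adj b d) (hbe : ¬ G.Adj b e)
    (hce : ¬ G.Adj c e) : G.HasInducedCycle 5 := by
  have nab : a ≠ b := hab.ne
  have nbc : b ≠ c := hbc.ne
  have ncd : c ≠ d := hcd.ne
  have nde : d ≠ e := hde.ne
  have nea : e ≠ a := hea.ne
  have nac : a ≠ c := by rintro rfl; exact had hcd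
  have nad : a ≠ d := by rintro rfl; exact hac hcd.symm
  have nbd : b ≠ d := by rintro rfl; exact hbe hde
  have nbe : b ≠ e := by rintro rfl; exact hbd hde.symm
  have nce : c ≠ e := by rintro rfl; exact hac hea.symm
  refine ⟨a, .cons hab (.cons hbc (.cons hcd (.cons hde (.cons hea .nil)))), ?_, by simp, ?_⟩
  · simp [Walk.isCycle_def, Walk.isTrail_def, List.Nodup, List.Pairwise]
    tauto
  · intro x hx y hy hxy
    simp [Walk.toSubgraph] at hx hy ⊢
    have hac' := fun h => hac (G.adj_symm h)
    have had' := fun h => had (G.adj_symm h)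
    have hbd' := fun h => hbd (G.adj_symm h)
    have hbe' := fun h => hbe (G.adj_symm h)
    have hce' := fun h => hce (G.adj_symm h)
    rcases hx with rfl|rfl|rfl|rfl|rfl <;> rcases hy with rfl|rfl|rfl|rfl|rfl <;>
      first
        | exact absurd hxy G.irrefl
        | (exact absurd hxy (by assumption))
        | simp

set_option maxHeartbeats 2000000 in
private lemma induced7_aux {V : Type*} (G : SimpleGraph V) (a b c d e f g : V)
    (hab : G.Adj a b) (hbc : G.Adj b c) (hcd : G.Adj c d) (hde : G.Adj d e) (hef : G.Adj e f)
    (hfg : G.Adj f g) (hga : G.Adj g a)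
    (hac : ¬ G.Adj a c) (had : ¬ G.Adj a d) (hae : ¬ G.Adj a e) (haf : ¬ G.Adj a f)
    (hbd : ¬ G.Adj b d) (hbe : ¬ G.Adj b e) (hbf : ¬ G.Adj b f) (hbg : ¬ G.Adj b g)
    (hce : ¬ G.Adj c e) (hcf : ¬ G.Adj c f) (hcg : ¬ G.Adj c g)
    (hdf : ¬ G.Adj d f) (hdg : ¬ G.Adj d g) (heg : ¬ G.Adj e g) :
    G.HasInducedCycle 7 := by
  have nab : a ≠ b := hab.ne
  have nbc : b ≠ c := hbc.ne
  have ncd : c ≠ d := hcd.ne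
  have nde : d ≠ e := hde.ne
  have nef : e ≠ f := hef.ne
  have nfg : f ≠ g := hfg.ne
  have nga : g ≠ a := hga.ne
  have nac : a ≠ c := by rintro rfl; exact had hcd
  have nad : a ≠ d := by rintro rfl; exact hae hde
  have nae : a ≠ e := by rintro rfl; exact haf hef
  have naf : a ≠ f := by rintro rfl; exact hae hef.symm
  have nbd : b ≠ d := by rintro rfl; exact hbe hde
  have nbe : b ≠ e := by rintro rfl; exact hbf hef
  have nbf : b ≠ f := by rintro rfl; exact hbg hfg
  have nbg : b ≠ g := by rintro rfl; exact hbf hfg.symm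
  have nce : c ≠ e := by rintro rfl; exact hcf hef
  have ncf : c ≠ f := by rintro rfl; exact hcg hfg
  have ncg : c ≠ g := by rintro rfl; exact hac hga.symm
  have ndf : d ≠ f := by rintro rfl; exact hdg hfg
  have ndg : d ≠ g := by rintro rfl; exact had hga.symm
  have neg : e ≠ g := by rintro rfl; exact hae hga.symm
  have nba := nab.symm; have ncb := nbc.symm; have ndc := ncd.symm; have ned := nde.symm
  have nfe := nef.symm; have ngf := nfg.symm; have nag := nga.symm
  have nca := nac.symm; have nda := nad.symm; have nea := nae.symm; have nfa := naf.symm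
  have ndb := nbd.symm; have neb := nbe.symm; have nfb := nbf.symm; have ngb := nbg.symm
  have nec := nce.symm; have nfc := ncf.symm; have ngc := ncg.symm
  have nfd := ndf.symm; have ngd := ndg.symm; have nge := neg.symm
  refine ⟨a, .cons hab (.cons hbc (.cons hcd (.cons hde (.cons hef (.cons hfg
    (.cons hga .nil)))))), ?_, by simp, ?_⟩
  · simp only [Walk.isCycle_def, Walk.isTrail_def, Walk.edges_cons, Walk.edges_nil,
      Walk.support_cons, Walk.support_nil, List.tail_cons, List.nodup_cons, List.nodup_nil,
      List.mem_cons, List.not_mem_nil, or_false, Sym2.eq, Sym2.rel_iff', Prod.mk.injEq,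
      Prod.swap_prod_mk, not_or, and_true]
    refine ⟨⟨?_, ?_⟩, ?_⟩ <;> tauto
  · intro x hx y hy hxy
    simp [Walk.toSubgraph] at hx hy ⊢
    have hac' := fun h => hac (G.adj_symm h)
    have had' := fun h => had (G.adj_symm h)
    have hae' := fun h => hae (G.adj_symm h)
    have haf' := fun h => haf (G.adj_symm h)
    have hbd' := fun h => hbd (G.adj_symm h)
    have hbe' := fun h => hbe (G.adj_symm h)
    have hbf' := fun h => hbf (G.adj_symm h)
    have hbg' := fun h => hbg (G.adj_symm h)
    have hce' := fun h => hce (G.adj_symm h)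
    have hcf' := fun h => hcf (G.adj_symm h)
    have hcg' := fun h => hcg (G.adj_symm h)
    have hdf' := fun h => hdf (G.adj_symm h)
    have hdg' := fun h => hdg (G.adj_symm h)
    have heg' := fun h => heg (G.adj_symm h)
    rcases hx with rfl|rfl|rfl|rfl|rfl|rfl|rfl <;> rcases hy with rfl|rfl|rfl|rfl|rfl|rfl|rfl <;>
      first
        | exact absurd hxy G.irrefl
        | (exact absurd hxy (by assumption))
        | simp

private lemma pathn_aux {V : Type*} (G : SimpleGraph V) {v x : V} {n : ℕ} (hn : n ≠ 0)
    (h : G.dist v x = n) : ∃ p : G.Walk v x, p.length = n := by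
  have hr : G.Reachable v x := by
    by_contra hr
    rw [SimpleGraph.dist_eq_zero_of_not_reachable hr] at h
    omega
  obtain ⟨p, hp⟩ := hr.exists_walk_length_eq_dist
  exact ⟨p, by omega⟩

private lemma path2_aux {V : Type*} (G : SimpleGraph V) {v x : V} (h : G.dist v x = 2) :
    ∃ a, G.Adj v a ∧ G.Adj a x := by
  obtain ⟨p, hp⟩ := pathn_aux G (by norm_num) h
  refine ⟨p.getVert 1, ?_, ?_⟩
  · have := p.adj_getVert_succ (i := 0) (by omega)
    simpa using this
  · have := p.adj_getVert_succ (i := 1) (by omega)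
    have h2 : p.getVert 2 = x := by rw [← hp]; exact p.getVert_length
    rwa [h2] at this

private lemma path3_aux {V : Type*} (G : SimpleGraph V) {v x : V} (h : G.dist v x = 3) :
    ∃ a b, G.Adj v a ∧ G.Adj a b ∧ G.Adj b x := by
  obtain ⟨p, hp⟩ := pathn_aux G (by norm_num) h
  refine ⟨p.getVert 1, p.getVert 2, ?_, p.adj_getVert_succ (i := 1) (by omega), ?_⟩
  · have := p.adj_getVert_succ (i := 0) (by omega)
    simpa using this
  · have := p.adj_getVert_succ (i := 2) (by omega)
    have h2 : p.getVert 3 = x := by rw [← hp]; exact p.getVert_length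
    rwa [h2] at this

/-- In a triangle-free graph with no 5-hole and no 7-hole, for each `i ∈ {1, 2, 3}` the set
of vertices at distance exactly `i` from any vertex `v` is a stable (independent) set. -/
theorem stmt_18 {V : Type*} [Fintype V] (G : SimpleGraph V)
    (htri : G.CliqueFree 3)
    (h5 : ¬ G.HasInducedCycle 5)
    (h7 : ¬ G.HasInducedCycle 7)
    (v : V) (i : ℕ) (hi : i ∈ ({1, 2, 3} : Set ℕ)) :
    ∀ x : V, G.dist v x = i → ∀ y : V, G.dist v y = i → ¬ G.Adj x y := by
  intro x hx y hy hxy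
  simp only [Set.mem_insert_iff, Set.mem_singleton_iff] at hi
  rcases hi with rfl | rfl | rfl
  · -- i = 1
    rw [SimpleGraph.dist_eq_one_iff_adj] at hx hy
    exact tri_aux htri hx hy hxy
  · -- i = 2
    obtain ⟨a, hva, hax⟩ := path2_aux G hx
    obtain ⟨b, hvb, hby⟩ := path2_aux G hy
    have hvx : ¬ G.Adj v x := fun h => by
      rw [← SimpleGraph.dist_eq_one_iff_adj] at h; omega
    have hvy : ¬ G.Adj v y := fun h => by
      rw [← SimpleGraph.dist_eq_one_iff_adj] at h; omega
    by_cases hab : a = b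
    · subst hab
      exact tri_aux htri hax hby hxy
    · refine h5 (induced5_aux G v a x y b hva hax hxy hby.symm hvb.symm hvx hvy ?_ ?_ ?_)
      · exact fun h => tri_aux htri hax h hxy
      · exact fun h => tri_aux htri hva hvb h
      · exact fun h => tri_aux htri h.symm hby hxy
  · -- i = 3
    obtain ⟨a1, a2, hva1, ha12, ha2x⟩ := path3_aux G hx
    obtain ⟨b1, b2, hvb1, hb12, hb2y⟩ := path3_aux G hy
    have hvx : ¬ G.Adj v x := fun h => by
      rw [← SimpleGraph.dist_eq_one_iff_adj] at h; omega
    have hvy : ¬ G.Adj v y := fun h => by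
      rw [← SimpleGraph.dist_eq_one_iff_adj] at h; omega
    have hva2 : ¬ G.Adj v a2 := fun h => by
      have := SimpleGraph.dist_le (Walk.cons h (Walk.cons ha2x .nil))
      simp at this; omega
    have hvb2 : ¬ G.Adj v b2 := fun h => by
      have := SimpleGraph.dist_le (Walk.cons h (Walk.cons hb2y .nil))
      simp at this; omega
    have ha1x : ¬ G.Adj a1 x := fun h => by
      have := SimpleGraph.dist_le (Walk.cons hva1 (Walk.cons h .nil))
      simp at this; omega
    have ha1y : ¬ G.Adj a1 y := fun h => by
      have := SimpleGraph.dist_le (Walk.cons hva1 (Walk.cons h .nil))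
      simp at this; omega
    have hb1x : ¬ G.Adj b1 x := fun h => by
      have := SimpleGraph.dist_le (Walk.cons hvb1 (Walk.cons h .nil))
      simp at this; omega
    have hb1y : ¬ G.Adj b1 y := fun h => by
      have := SimpleGraph.dist_le (Walk.cons hvb1 (Walk.cons h .nil))
      simp at this; omega
    have ha2y : ¬ G.Adj a2 y := fun h => tri_aux htri ha2x h hxy
    have hb2x : ¬ G.Adj b2 x := fun h => tri_aux htri h hb2y hxy
    have ha1b1 : ¬ G.Adj a1 b1 := fun h => tri_aux htri hva1 hvb1 h
    by_cases hab1 : a1 = b1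
    · subst hab1
      refine h5 (induced5_aux G a1 a2 x y b2 ha12 ha2x hxy hb2y.symm hb12.symm
        ha1x ha1y ha2y ?_ (fun h => hb2x h.symm))
      exact fun h => tri_aux htri ha12 hb12 h
    · by_cases h22 : G.Adj a2 b2
      · refine h5 (induced5_aux G v a1 a2 b2 b1 hva1 ha12 h22 hb12.symm hvb1.symm
          hva2 hvb2 ?_ ha1b1 ?_)
        · exact fun h => tri_aux htri ha12 h h22
        · exact fun h => tri_aux htri h.symm hb12 h22
      · by_cases h21 : G.Adj a2 b1
        · exact h5 (induced5_aux G b1 a2 x y b2 h21.symm ha2x hxy hb2y.symm hb12.symm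
            hb1x hb1y ha2y h22 (fun h => hb2x h.symm))
        · by_cases h12 : G.Adj a1 b2
          · exact h5 (induced5_aux G a1 a2 x y b2 ha12 ha2x hxy hb2y.symm h12.symm
              ha1x ha1y ha2y h22 (fun h => hb2x h.symm))
          · exact h7 (induced7_aux G v a1 a2 x y b2 b1 hva1 ha12 ha2x hxy hb2y.symm
              hb12.symm hvb1.symm hva2 hvx hvy hvb2 ha1x ha1y h12 ha1b1 ha2y h22 h21
              (fun h => hb2x h.symm) (fun h => hb1x h.symm) (fun h => hb1y h.symm))
end
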